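/- arXiv:2409.03436 — 4 statements merged into one kernel-verified Lean document; each statement's English description precedes it below -/
import Mathlib

section
/- Let a, b, A > 0 and c ≥ 0 be real numbers. The function g(z) = ln(1 + a z) / (b z + A + c · ln(1 + a z)) on the domain z > 0 attains its maximum at the unique point z* = (e^u − 1)/a, where u is the unique positive real number satisfying (u − 1)e^u = aA/b − 1; that is, g(z*) ≥ g(z) for all z > 0, with equality only at z = z*. -/
set_option maxHeartbeats 1000000


/-- The generic energy-efficiency objective `g(z) = ln(1 + a z) / (b z + A + c ln(1 + a z))`. -/
noncomputable def g0 (a b A c z : ℝ) : ℝ :=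
  Real.log (1 + a * z) / (b * z + A + c * Real.log (1 + a * z))

/-- For `a, b, A > 0` and `c ≥ 0`, the function `g` on `z > 0` attains its maximum at the
unique point `z* = (e^u - 1)/a`, where `u > 0` satisfies `(u - 1) e^u = aA/b - 1`. -/
theorem stmt_0 (a b A c u : ℝ) (ha : 0 < a) (hb : 0 < b) (hA : 0 < A) (hc : 0 ≤ c)
    (hu : 0 < u) (hue : (u - 1) * Real.exp u = a * A / b - 1) :
    ∀ z : ℝ, 0 < z →
      g0 a b A c z ≤ g0 a b A c ((Real.exp u - 1) / a) ∧
      (g0 a b A c z = g0 a b A c ((Real.exp u - 1) / a) → z = (Real.exp u - 1) / a) := by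
  intro z hz
  have hE1 : 1 < Real.exp u := by
    calc (1:ℝ) = Real.exp 0 := (Real.exp_zero).symm
    _ < Real.exp u := Real.exp_lt_exp.mpr hu
  set E := Real.exp u with hE
  set zs := (E - 1) / a with hzs
  have hE0 : (0:ℝ) < E := by linarith
  have hzs0 : 0 < zs := div_pos (by linarith) ha
  have hazs : 1 + a * zs = E := by rw [hzs]; field_simp; ring
  have hLs : Real.log (1 + a * zs) = u := by rw [hazs, hE, Real.log_exp]
  have h1az : 1 < 1 + a * z := by nlinarith
  have hL0 : 0 < Real.log (1 + a * z) := Real.log_pos h1az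
  set L := Real.log (1 + a * z) with hLdef
  set t := (1 + a * z) / E with ht
  have ht0 : 0 < t := div_pos (by linarith) hE0
  have hLt : L = u + Real.log t := by
    rw [hLdef, ht, Real.log_div (by linarith) (ne_of_gt hE0), hE, Real.log_exp]; ring
  have h2 : (u - 1) * E * b = a * A - b := by
    have hb' : b ≠ 0 := ne_of_gt hb
    field_simp at hue
    linarith [hue]
  have hkey : (b * zs + A) * (u + t - 1) = u * (b * z + A) := by
    have ha' : a ≠ 0 := ne_of_gt ha
    have hE' : E ≠ 0 := ne_of_gt hE0
    rw [hzs, ht]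
    field_simp
    linear_combination (E - 1 - a * z) * h2
  have hpos : 0 < b * zs + A := by nlinarith
  have hmain : L * (b * zs + A) ≤ u * (b * z + A) := by
    have hlog : Real.log t ≤ t - 1 := Real.log_le_sub_one_of_pos ht0
    calc L * (b * zs + A) = (b * zs + A) * (u + Real.log t) := by rw [hLt]; ring
    _ ≤ (b * zs + A) * (u + (t - 1)) := by nlinarith
    _ = u * (b * z + A) := by rw [← hkey]; ring
  have hmain' : z ≠ zs → L * (b * zs + A) < u * (b * z + A) := by
    intro hne
    have ht1 : t ≠ 1 := by
      intro h
      apply hne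
      have h3 : 1 + a * z = E := by
        rw [ht, div_eq_one_iff_eq (ne_of_gt hE0)] at h; linarith
      rw [hzs]; field_simp; linarith
    have hlog : Real.log t < t - 1 := Real.log_lt_sub_one_of_pos ht0 ht1
    calc L * (b * zs + A) = (b * zs + A) * (u + Real.log t) := by rw [hLt]; ring
    _ < (b * zs + A) * (u + (t - 1)) := by nlinarith
    _ = u * (b * z + A) := by rw [← hkey]; ring
  have hD : 0 < b * z + A + c * L := by nlinarith
  have hDs : 0 < b * zs + A + c * u := by nlinarith
  have hgz : g0 a b A c z = L / (b * z + A + c * L) := by rw [g0]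
  have hgzs : g0 a b A c zs = u / (b * zs + A + c * u) := by
    rw [g0, hLs]
  constructor
  · rw [hgz, hgzs, div_le_div_iff₀ hD hDs]
    calc L * (b * zs + A + c * u) = L * (b * zs + A) + c * (u * L) := by ring
    _ ≤ u * (b * z + A) + c * (u * L) := by linarith
    _ = u * (b * z + A + c * L) := by ring
  · intro heq
    by_contra hne
    rw [hgz, hgzs, div_eq_div_iff (ne_of_gt hD) (ne_of_gt hDs)] at heq
    have h4 : L * (b * zs + A) = u * (b * z + A) := by linear_combination heq
    linarith [hmain' hne]
end

section
/- Let β, N₀, κ, ν, M > 0 and η ≥ 0 be real numbers. The function g(z) = log₂(1 + (Mβ/N₀) z) / (z/κ + νM + η·log₂(1 + (Mβ/N₀) z)) on the domain z > 0 attains its maximum at the unique point z* = N₀(e^u − 1)/(Mβ), where u is the unique positive real number satisfying (u − 1)e^u = κ M² β ν / N₀ − 1. -/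
/-- The energy efficiency as a function of the power spectral density `z = P/B`,
with negligible fixed circuit power and per-antenna transceiver power. -/
noncomputable def g2 (β N₀ κ ν η M z : ℝ) : ℝ :=
  Real.logb 2 (1 + (M * β / N₀) * z) /
    (z / κ + ν * M + η * Real.logb 2 (1 + (M * β / N₀) * z))

private lemma key_ineq (u t : ℝ) (hu : 0 < u) (ht : 0 < t) (hne : t ≠ u) :
    t * (Real.exp u - 1 + ((u - 1) * Real.exp u + 1)) <
      u * (Real.exp t - 1 + ((u - 1) * Real.exp u + 1)) := by
  have h : (t - u) + 1 < Real.exp (t - u) :=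
    Real.add_one_lt_exp (sub_ne_zero.mpr hne)
  have he : Real.exp t = Real.exp (t - u) * Real.exp u := by
    rw [← Real.exp_add]; ring_nf
  rw [he]
  nlinarith [Real.exp_pos u, mul_pos hu (Real.exp_pos u),
    mul_lt_mul_of_pos_left h (mul_pos hu (Real.exp_pos u))]

/-- Theorem 1 of the paper: `g2` on `z > 0` attains its maximum at the unique point
`z* = N₀ (e^u - 1)/(M β)`, where `u > 0` satisfies `(u - 1) e^u = κ M² β ν / N₀ - 1`. -/
theorem stmt_2 (β N₀ κ ν M η u : ℝ) (hβ : 0 < β) (hN : 0 < N₀) (hκ : 0 < κ)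
    (hν : 0 < ν) (hM : 0 < M) (hη : 0 ≤ η) (hu : 0 < u)
    (hue : (u - 1) * Real.exp u = κ * M ^ 2 * β * ν / N₀ - 1) :
    ∀ z : ℝ, 0 < z →
      g2 β N₀ κ ν η M z ≤ g2 β N₀ κ ν η M (N₀ * (Real.exp u - 1) / (M * β)) ∧
      (g2 β N₀ κ ν η M z = g2 β N₀ κ ν η M (N₀ * (Real.exp u - 1) / (M * β)) →
        z = N₀ * (Real.exp u - 1) / (M * β)) := by
  intro z hz
  have hMβ : 0 < M * β := mul_pos hM hβ
  have ha0 : 0 < M * β / N₀ := div_pos hMβ hN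
  set a := M * β / N₀ with ha_def
  have heu1 : 1 < Real.exp u := by
    calc (1:ℝ) = Real.exp 0 := Real.exp_zero.symm
    _ < Real.exp u := Real.exp_lt_exp.mpr hu
  set zs := N₀ * (Real.exp u - 1) / (M * β) with hzs_def
  have hzs : 0 < zs := div_pos (mul_pos hN (by linarith)) hMβ
  have hazs : a * zs = Real.exp u - 1 := by
    rw [ha_def, hzs_def]
    field_simp
  have h1azs : 1 + a * zs = Real.exp u := by rw [hazs]; ring
  have hl2 : (0:ℝ) < Real.log 2 := Real.log_pos (by norm_num)
  set t := Real.log (1 + a * z) with ht_def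
  have h1az : 1 < 1 + a * z := by nlinarith [mul_pos ha0 hz]
  have ht : 0 < t := Real.log_pos h1az
  have hexpt : Real.exp t = 1 + a * z := Real.exp_log (by linarith)
  have hL1 : Real.logb 2 (1 + a * z) = t / Real.log 2 := by
    rw [Real.logb, ht_def]
  have hL2 : Real.logb 2 (1 + a * zs) = u / Real.log 2 := by
    rw [h1azs, Real.logb, Real.log_exp]
  have hD1 : 0 < z / κ + ν * M + η * (t / Real.log 2) := by
    have h1 : 0 < z / κ := div_pos hz hκ
    have h2 : 0 < ν * M := mul_pos hν hM
    have h3 : 0 ≤ η * (t / Real.log 2) := mul_nonneg hη (div_pos ht hl2).le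
    linarith
  have hD2 : 0 < zs / κ + ν * M + η * (u / Real.log 2) := by
    have h1 : 0 < zs / κ := div_pos hzs hκ
    have h2 : 0 < ν * M := mul_pos hν hM
    have h3 : 0 ≤ η * (u / Real.log 2) := mul_nonneg hη (div_pos hu hl2).le
    linarith
  by_cases hne : t = u
  · have hz_eq : z = zs := by
      have h1 : a * z = a * zs := by
        have h2 := hexpt
        rw [hne] at h2
        rw [hazs]; linarith
      exact mul_left_cancel₀ (ne_of_gt ha0) h1
    rw [hz_eq]
    exact ⟨le_refl _, fun _ => rfl⟩
  · have hkey := key_ineq u t hu ht hne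
    have hC : (u - 1) * Real.exp u + 1 = a * κ * (ν * M) := by
      rw [hue, ha_def]
      field_simp
      ring
    rw [hC] at hkey
    have h1 : Real.exp u - 1 = a * zs := hazs.symm
    have h2 : Real.exp t - 1 = a * z := by rw [hexpt]; ring
    rw [h1, h2] at hkey
    have Hs : t * (zs / κ + ν * M) < u * (z / κ + ν * M) := by
      have haκ : 0 < a * κ := mul_pos ha0 hκ
      rw [← mul_lt_mul_iff_left₀ haκ]
      have e1 : t * (zs / κ + ν * M) * (a * κ) = t * (a * zs + a * κ * (ν * M)) := by
        field_simp
      have e2 : u * (z / κ + ν * M) * (a * κ) = u * (a * z + a * κ * (ν * M)) := by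
        field_simp
      rw [e1, e2]; exact hkey
    have hglt : g2 β N₀ κ ν η M z < g2 β N₀ κ ν η M zs := by
      simp only [g2]
      rw [← ha_def, hL1, hL2]
      rw [div_lt_div_iff₀ hD1 hD2]
      have hint : 0 < (u * (z / κ + ν * M) - t * (zs / κ + ν * M)) * (Real.log 2)⁻¹ :=
        mul_pos (by linarith) (inv_pos.mpr hl2)
      have hexpand : u / Real.log 2 * (z / κ + ν * M + η * (t / Real.log 2)) -
          t / Real.log 2 * (zs / κ + ν * M + η * (u / Real.log 2)) =
          (u * (z / κ + ν * M) - t * (zs / κ + ν * M)) * (Real.log 2)⁻¹ := by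
        field_simp
        ring
      linarith [hexpand ▸ hint]
    exact ⟨hglt.le, fun h => absurd h (ne_of_lt hglt)⟩
end

section
/- Let β, N₀, κ, P, M, ν > 0 and μ, D₀ ≥ 0 be real numbers, and set K = κμ + D₀Mκ + P. Then there exists a unique B > 0 satisfying the equation ( (B N₀/(M P β))·K + K )·ln(1 + M P β/(B N₀)) = MκνB + K. -/
set_option maxHeartbeats 1000000 in
/-- Equation (21) of the paper: the first-order optimality condition in the bandwidth `B`
has a unique positive solution. Here `K = κμ + D₀Mκ + P`. -/
theorem stmt_7 (β N₀ κ P M ν μ D₀ K : ℝ)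
    (hβ : 0 < β) (hN : 0 < N₀) (hκ : 0 < κ) (hP : 0 < P) (hM : 0 < M) (hν : 0 < ν)
    (hμ : 0 ≤ μ) (hD : 0 ≤ D₀) (hK : K = κ * μ + D₀ * M * κ + P) :
    ∃! B : ℝ, 0 < B ∧
      ((B * N₀ / (M * P * β)) * K + K) * Real.log (1 + M * P * β / (B * N₀)) =
        M * κ * ν * B + K := by
  have hMPβ : 0 < M * P * β := by positivity
  have hK0 : 0 < K := by rw [hK]; positivity
  obtain ⟨d, hd⟩ : ∃ d : ℝ, d = M * P * β / N₀ := ⟨_, rfl⟩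
  have hd0 : 0 < d := by rw [hd]; positivity
  obtain ⟨a, ha⟩ : ∃ a : ℝ, a = M * κ * ν := ⟨_, rfl⟩
  have ha0 : 0 < a := by rw [ha]; positivity
  set F : ℝ → ℝ := fun B =>
      ((B * N₀ / (M * P * β)) * K + K) * Real.log (1 + M * P * β / (B * N₀)) -
        (M * κ * ν * B + K) with hF
  clear_value F
  -- rewrite of the argument of log and the coefficient
  have harg : ∀ B : ℝ, M * P * β / (B * N₀) = d / B := by
    intro B
    rw [hd, div_div]; ring_nf
  have hcoef : ∀ B : ℝ, B * N₀ / (M * P * β) = B / d := by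
    intro B
    rw [hd, div_div_eq_mul_div]
  -- derivative of F at any positive B, and its negativity
  have hderiv : ∀ B : ℝ, 0 < B →
      HasDerivAt F (N₀ * K / (M * P * β) * Real.log (1 + M * P * β / (B * N₀)) +
        ((B * N₀ / (M * P * β)) * K + K) *
          ((-(d) / B ^ 2) / (1 + M * P * β / (B * N₀))) - a) B := by
    intro B hB
    have hBne : B ≠ 0 := hB.ne'
    have hargpos : 0 < 1 + M * P * β / (B * N₀) := by
      rw [harg B]; positivity
    have h1 : HasDerivAt (fun x : ℝ => 1 + M * P * β / (x * N₀)) (-(d) / B ^ 2) B := by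
      have e : (fun x : ℝ => 1 + M * P * β / (x * N₀)) = fun x : ℝ => 1 + d * x⁻¹ := by
        funext x; rw [hd]; field_simp
      rw [e]
      have h := ((hasDerivAt_inv hBne).const_mul d).const_add 1
      refine h.congr_deriv ?_
      ring
    have hlog : HasDerivAt (fun x : ℝ => Real.log (1 + M * P * β / (x * N₀)))
        ((-(d) / B ^ 2) / (1 + M * P * β / (B * N₀))) B := h1.log hargpos.ne'
    have h2 : HasDerivAt (fun x : ℝ => (x * N₀ / (M * P * β)) * K + K)
        (N₀ * K / (M * P * β)) B := by
      have e : (fun x : ℝ => (x * N₀ / (M * P * β)) * K + K) =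
          fun x : ℝ => (N₀ * K / (M * P * β)) * x + K := by
        funext x; ring
      rw [e]
      simpa using ((hasDerivAt_id B).const_mul (N₀ * K / (M * P * β))).add_const K
    have h3 : HasDerivAt (fun x : ℝ => M * κ * ν * x + K) a B := by
      rw [ha]
      simpa using ((hasDerivAt_id B).const_mul (M * κ * ν)).add_const K
    rw [hF]
    exact (h2.mul hlog).sub h3
  have hneg : ∀ B : ℝ, 0 < B →
      N₀ * K / (M * P * β) * Real.log (1 + M * P * β / (B * N₀)) +
        ((B * N₀ / (M * P * β)) * K + K) *
          ((-(d) / B ^ 2) / (1 + M * P * β / (B * N₀))) - a < 0 := by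
    intro B hB
    rw [harg B, hcoef B]
    have hL : Real.log (1 + d / B) ≤ d / B := by
      have := Real.log_le_sub_one_of_pos (show (0:ℝ) < 1 + d / B by positivity)
      linarith
    have hcoef1 : N₀ * K / (M * P * β) = K / d := by
      rw [hd]; field_simp
    rw [hcoef1]
    have hsecond : (B / d * K + K) * ((-(d) / B ^ 2) / (1 + d / B)) = -(K / B) := by
      have h1 : 1 + d / B = (B + d) / B := by field_simp
      rw [h1]; field_simp
    rw [hsecond]
    have h4 : K / d * Real.log (1 + d / B) ≤ K / B := by
      calc K / d * Real.log (1 + d / B) ≤ K / d * (d / B) := by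
            apply mul_le_mul_of_nonneg_left hL (by positivity)
        _ = K / B := by field_simp
    linarith
  -- F in a clean form
  have hFval : ∀ B : ℝ, F B = (B / d * K + K) * Real.log (1 + d / B) - (a * B + K) := by
    intro B; rw [hF]; simp only [harg B, hcoef B, ha]
  -- strict antitonicity
  have hanti : StrictAntiOn F (Set.Ioi 0) := by
    apply strictAntiOn_of_deriv_neg (convex_Ioi 0)
    · intro x hx
      exact ((hderiv x hx).differentiableAt.continuousAt).continuousWithinAt
    · intro x hx
      rw [interior_Ioi] at hx
      rw [(hderiv x hx).deriv]
      exact hneg x hx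
  -- endpoints
  obtain ⟨E, hE⟩ : ∃ E : ℝ, E = Real.exp ((a + K) / K) - 1 := ⟨_, rfl⟩
  have hE0 : 0 < E := by
    rw [hE]
    have : (1:ℝ) < Real.exp ((a + K) / K) := Real.one_lt_exp_iff.mpr (by positivity)
    linarith
  obtain ⟨B₁, hB₁⟩ : ∃ B₁ : ℝ, B₁ = min 1 (d / E) := ⟨_, rfl⟩
  have hB₁0 : 0 < B₁ := by rw [hB₁]; exact lt_min one_pos (by positivity)
  have hB₁le1 : B₁ ≤ 1 := by rw [hB₁]; exact min_le_left _ _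
  have hF₁ : 0 ≤ F B₁ := by
    rw [hFval]
    have hlogge : (a + K) / K ≤ Real.log (1 + d / B₁) := by
      rw [Real.le_log_iff_exp_le (by positivity)]
      have h5 : B₁ ≤ d / E := by rw [hB₁]; exact min_le_right _ _
      have h6 : E ≤ d / B₁ := by
        rw [le_div_iff₀ hB₁0]
        rw [le_div_iff₀ hE0] at h5
        nlinarith
      rw [hE] at h6; linarith
    have hlogpos : 0 ≤ Real.log (1 + d / B₁) := by
      apply Real.log_nonneg
      have : 0 < d / B₁ := by positivity
      linarith
    have hc : K ≤ B₁ / d * K + K := by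
      have : 0 ≤ B₁ / d * K := by positivity
      linarith
    have h7 : K * ((a + K) / K) ≤ (B₁ / d * K + K) * Real.log (1 + d / B₁) := by
      calc K * ((a + K) / K) ≤ K * Real.log (1 + d / B₁) :=
            mul_le_mul_of_nonneg_left hlogge hK0.le
        _ ≤ (B₁ / d * K + K) * Real.log (1 + d / B₁) :=
            mul_le_mul_of_nonneg_right hc hlogpos
    have hKK : K * ((a + K) / K) = a + K := by field_simp
    nlinarith [ha0, hB₁le1]
  obtain ⟨B₂, hB₂⟩ : ∃ B₂ : ℝ, B₂ = max 1 (Real.sqrt (K * d / a) + 1) := ⟨_, rfl⟩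
  have hB₂ge1 : (1:ℝ) ≤ B₂ := by rw [hB₂]; exact le_max_left _ _
  have hB₂0 : 0 < B₂ := lt_of_lt_of_le one_pos hB₂ge1
  have hB₁₂ : B₁ ≤ B₂ := le_trans hB₁le1 hB₂ge1
  have hF₂ : F B₂ ≤ 0 := by
    rw [hFval]
    have hL : Real.log (1 + d / B₂) ≤ d / B₂ := by
      have := Real.log_le_sub_one_of_pos (show (0:ℝ) < 1 + d / B₂ by positivity)
      linarith
    have hcpos : 0 ≤ B₂ / d * K + K := by positivity
    have hup : (B₂ / d * K + K) * Real.log (1 + d / B₂) ≤ (B₂ / d * K + K) * (d / B₂) :=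
      mul_le_mul_of_nonneg_left hL hcpos
    have hsq : K * d / a < B₂ ^ 2 := by
      have h6 : Real.sqrt (K * d / a) + 1 ≤ B₂ := by rw [hB₂]; exact le_max_right _ _
      have h7 : Real.sqrt (K * d / a) ^ 2 = K * d / a := Real.sq_sqrt (by positivity)
      nlinarith [Real.sqrt_nonneg (K * d / a)]
    have heq : (B₂ / d * K + K) * (d / B₂) = K + K * d / B₂ := by
      field_simp [hd0.ne', hB₂0.ne']
    have h8 : K * d / B₂ < a * B₂ := by
      rw [div_lt_iff₀ hB₂0]
      rw [div_lt_iff₀ ha0] at hsq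
      nlinarith
    rw [heq] at hup
    linarith
  -- existence via IVT
  have hcont : ContinuousOn F (Set.Icc B₁ B₂) := by
    intro x hx
    have hx0 : 0 < x := lt_of_lt_of_le hB₁0 hx.1
    exact ((hderiv x hx0).differentiableAt.continuousAt).continuousWithinAt
  have hmem : (0:ℝ) ∈ Set.Icc (F B₂) (F B₁) := ⟨hF₂, hF₁⟩
  obtain ⟨B, hBmem, hFB⟩ := intermediate_value_Icc' hB₁₂ hcont hmem
  have hBpos : 0 < B := lt_of_lt_of_le hB₁0 hBmem.1
  refine ⟨B, ⟨hBpos, ?_⟩, ?_⟩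
  · have h := hFB
    simp only [hF] at h
    linarith
  · rintro y ⟨hy, heqy⟩
    have hFy : F y = 0 := by simp only [hF]; linarith
    exact hanti.injOn (Set.mem_Ioi.mpr hy) (Set.mem_Ioi.mpr hBpos) (by rw [hFy, hFB])
end

section
/- Let N₀, M, P, β > 0 and K > 0 be real numbers. The function B ↦ ( (B N₀/(M P β))·K + K )·ln(1 + M P β/(B N₀)) is strictly decreasing on (0, ∞), its limit as B → 0⁺ is +∞, and its limit as B → ∞ is K. -/
open Filter Real Set

/-- The key monotonicity claim in the proof of Lemma 2 of the paper: the left-hand side of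
the bandwidth optimality equation is strictly decreasing on `(0, ∞)`, tends to `+∞` as
`B → 0⁺`, and tends to `K` as `B → ∞`. -/
theorem stmt_9 (N₀ M P β K : ℝ)
    (hN : 0 < N₀) (hM : 0 < M) (hP : 0 < P) (hβ : 0 < β) (hK : 0 < K) :
    StrictAntiOn
      (fun B : ℝ =>
        ((B * N₀ / (M * P * β)) * K + K) * Real.log (1 + M * P * β / (B * N₀)))
      (Set.Ioi (0 : ℝ)) ∧
    Filter.Tendsto
      (fun B : ℝ =>
        ((B * N₀ / (M * P * β)) * K + K) * Real.log (1 + M * P * β / (B * N₀)))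
      (nhdsWithin 0 (Set.Ioi 0)) Filter.atTop ∧
    Filter.Tendsto
      (fun B : ℝ =>
        ((B * N₀ / (M * P * β)) * K + K) * Real.log (1 + M * P * β / (B * N₀)))
      Filter.atTop (nhds K) := by
  set c : ℝ := M * P * β with hc_def
  have hc : 0 < c := by positivity
  set f : ℝ → ℝ := fun B => ((B * N₀ / c) * K + K) * Real.log (1 + c / (B * N₀)) with hf_def
  have key : ∀ B ∈ Set.Ioi (0 : ℝ), HasDerivAt f
      ((N₀ / c * K) * Real.log (1 + c / (B * N₀)) +
        ((B * N₀ / c) * K + K) * ((-(c * N₀) / (B * N₀) ^ 2) / (1 + c / (B * N₀)))) B := by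
    intro B hB
    have hB0 : (0 : ℝ) < B := hB
    have hBN : 0 < B * N₀ := by positivity
    have h1 : HasDerivAt (fun B : ℝ => B * N₀) N₀ B := by
      simpa using (hasDerivAt_id B).mul_const N₀
    have h2 : HasDerivAt (fun B : ℝ => c / (B * N₀)) (-(c * N₀) / (B * N₀) ^ 2) B := by
      have := (hasDerivAt_const B c).fun_div h1 (ne_of_gt hBN)
      simpa using this
    have hpos : 0 < 1 + c / (B * N₀) := by positivity
    have h3 : HasDerivAt (fun B : ℝ => 1 + c / (B * N₀)) (-(c * N₀) / (B * N₀) ^ 2) B := by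
      exact h2.const_add 1
    have h4 := h3.log (ne_of_gt hpos)
    have h5 : HasDerivAt (fun B : ℝ => (B * N₀ / c) * K + K) (N₀ / c * K) B := by
      have := ((h1.div_const c).mul_const K).add_const K
      simpa using this
    exact h5.mul h4
  have anti : StrictAntiOn f (Set.Ioi (0 : ℝ)) := by
    apply strictAntiOn_of_deriv_neg (convex_Ioi 0)
    · exact fun x hx => ((key x hx).continuousAt).continuousWithinAt
    · intro x hx
      rw [interior_Ioi] at hx
      have hx0 : (0 : ℝ) < x := hx
      have hxN : 0 < x * N₀ := by positivity
      have hpos : 0 < 1 + c / (x * N₀) := by positivity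
      rw [(key x hx).deriv]
      have hL : Real.log (1 + c / (x * N₀)) < c / (x * N₀) := by
        have := Real.log_lt_sub_one_of_pos hpos (by
          have : 0 < c / (x * N₀) := by positivity
          linarith)
        linarith
      have hEq : (N₀ / c * K) * Real.log (1 + c / (x * N₀)) +
          ((x * N₀ / c) * K + K) * ((-(c * N₀) / (x * N₀) ^ 2) / (1 + c / (x * N₀))) =
          (N₀ * K / c) * (Real.log (1 + c / (x * N₀)) - c / (x * N₀)) := by
        field_simp
        ring
      rw [hEq]
      exact mul_neg_of_pos_of_neg (by positivity) (by linarith)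
  have hmulN : Filter.Tendsto (fun B : ℝ => B * N₀) atTop atTop :=
    Filter.Tendsto.atTop_mul_const hN tendsto_id
  refine ⟨anti, ?_, ?_⟩
  · -- limit at 0⁺
    have hBN0 : Filter.Tendsto (fun B : ℝ => B * N₀) (nhdsWithin 0 (Set.Ioi 0))
        (nhdsWithin 0 (Set.Ioi 0)) := by
      apply tendsto_nhdsWithin_of_tendsto_nhds_of_eventually_within
      · have : Filter.Tendsto (fun B : ℝ => B * N₀) (nhds 0) (nhds 0) := by
          have h := (continuous_mul_right N₀).tendsto (0 : ℝ); rwa [zero_mul] at h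
        exact this.mono_left nhdsWithin_le_nhds
      · filter_upwards [self_mem_nhdsWithin] with B hB
        exact mul_pos hB hN
    have hinv : Filter.Tendsto (fun B : ℝ => c / (B * N₀)) (nhdsWithin 0 (Set.Ioi 0)) atTop := by
      have := (tendsto_inv_nhdsGT_zero.comp hBN0).const_mul_atTop hc
      simpa [div_eq_mul_inv, Function.comp] using this
    have hlog : Filter.Tendsto (fun B : ℝ => Real.log (1 + c / (B * N₀)))
        (nhdsWithin 0 (Set.Ioi 0)) atTop :=
      Real.tendsto_log_atTop.comp (tendsto_atTop_add_const_left _ 1 hinv)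
    have hKlog : Filter.Tendsto (fun B : ℝ => K * Real.log (1 + c / (B * N₀)))
        (nhdsWithin 0 (Set.Ioi 0)) atTop := hlog.const_mul_atTop hK
    apply Filter.tendsto_atTop_mono' _ _ hKlog
    filter_upwards [self_mem_nhdsWithin] with B hB
    have hB0 : (0 : ℝ) < B := hB
    have hBN : 0 < B * N₀ := by positivity
    have hlogpos : 0 ≤ Real.log (1 + c / (B * N₀)) := by
      apply Real.log_nonneg
      have : 0 ≤ c / (B * N₀) := by positivity
      linarith
    have hcoef : K ≤ (B * N₀ / c) * K + K := by nlinarith [div_pos hBN hc]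
    exact mul_le_mul_of_nonneg_right hcoef hlogpos
  · -- limit at ∞
    have hx : Filter.Tendsto (fun B : ℝ => (B * N₀) * Real.log (1 + c / (B * N₀)))
        atTop (nhds c) := (Real.tendsto_mul_log_one_add_div_atTop c).comp hmulN
    have hfrac0 : Filter.Tendsto (fun B : ℝ => c / (B * N₀)) atTop (nhds 0) :=
      Filter.Tendsto.div_atTop tendsto_const_nhds hmulN
    have hlog0 : Filter.Tendsto (fun B : ℝ => Real.log (1 + c / (B * N₀))) atTop (nhds 0) := by
      have h1 : Filter.Tendsto (fun B : ℝ => 1 + c / (B * N₀)) atTop (nhds 1) := by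
        simpa using hfrac0.const_add 1
      have := (Real.continuousAt_log (by norm_num : (1:ℝ) ≠ 0)).tendsto.comp h1
      rw [Real.log_one] at this; exact this
    have hsum : Filter.Tendsto f atTop (nhds (K / c * c + K * 0)) := by
      apply ((hx.const_mul (K / c)).add (hlog0.const_mul K)).congr
      intro B
      simp only [hf_def]
      ring
    have : K / c * c + K * 0 = K := by rw [mul_zero, add_zero, div_mul_cancel₀ K hc.ne']
    rwa [this] at hsum
end
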